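/- Let P > 0, N₀ > 0, η ∈ (0,1], α ∈ (0,1), and let X and W be independent exponential random variables with means λ_SR > 0 and λ_RD > 0. Let θ₂ = √( N₀(1−α)/(2ηαP) ), let ψ(x) = N₀²/( P·( (2ηα/(1−α))·P·x² − N₀ ) ) − x, and let θ₃ be the unique zero of ψ in (θ₂, ∞). Then ℙ( (X + W)·P·( (2ηα/(1−α))·P·W² − N₀ ) > N₀² ) = exp(−θ₃/λ_RD) + (1/λ_RD)·∫_{θ₂}^{θ₃} exp( −( ψ(x)/λ_SR + x/λ_RD ) ) dx. -/

import Mathlib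

open scoped ENNReal
open MeasureTheory ProbabilityTheory Real Set

lemma expMeasure_apply' {r : ℝ} {s : Set ℝ} (hs : MeasurableSet s) :
    expMeasure r s = ∫⁻ x in s, exponentialPDF r x := by
  rw [expMeasure, gammaMeasure, withDensity_apply _ hs]; rfl

lemma expMeasure_Iio_zero {r : ℝ} : expMeasure r (Iio 0) = 0 := by
  rw [expMeasure_apply' measurableSet_Iio]
  exact lintegral_exponentialPDF_of_nonpos le_rfl

lemma expMeasure_Ioi {r : ℝ} (hr : 0 < r) (t : ℝ) :
    expMeasure r (Ioi t) = ENNReal.ofReal (Real.exp (-(r * max t 0))) := by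
  have hp : IsProbabilityMeasure (expMeasure r) := isProbabilityMeasure_expMeasure hr
  have hIic : expMeasure r (Iic t)
      = ENNReal.ofReal (if 0 ≤ t then 1 - Real.exp (-(r * t)) else 0) := by
    rw [expMeasure_apply' measurableSet_Iic, lintegral_exponentialPDF_eq_antiDeriv hr]
  have h1 : expMeasure r (Ioi t) = 1 - expMeasure r (Iic t) := by
    rw [← Set.compl_Iic, measure_compl measurableSet_Iic (measure_ne_top _ _), measure_univ]
  rw [h1, hIic]
  rcases le_or_gt 0 t with h | h
  · rw [if_pos h, max_eq_left h]
    have he : Real.exp (-(r * t)) ≤ 1 := by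
      rw [Real.exp_le_one_iff]; nlinarith
    have h0 : (0:ℝ) ≤ 1 - Real.exp (-(r * t)) := by linarith
    rw [← ENNReal.ofReal_one, ← ENNReal.ofReal_sub _ h0]
    norm_num
  · rw [if_neg (not_le.mpr h), max_eq_right h.le]
    simp

set_option maxHeartbeats 2000000 in
/-- **Probability of strictly positive secrecy rate, TS policy (Proposition 6).**
`ℙ((X+W) P((2ηα/(1-α))P W² - N₀) > N₀²) = e^{-θ₃/λ_RD} + (1/λ_RD)∫_{θ₂}^{θ₃}
e^{-(ψ(x)/λ_SR + x/λ_RD)} dx`, where `θ₃` is the unique zero of `ψ` in `(θ₂, ∞)`. -/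
theorem prob_positive_secrecy_TS
    {Ω : Type*} [MeasurableSpace Ω] (μ : Measure Ω) [IsProbabilityMeasure μ]
    (X W : Ω → ℝ) (hXm : Measurable X) (hWm : Measurable W)
    (hindep : IndepFun X W μ)
    (lamSR lamRD : ℝ) (hlamSR : 0 < lamSR) (hlamRD : 0 < lamRD)
    (hX : Measure.map X μ = expMeasure lamSR⁻¹)
    (hW : Measure.map W μ = expMeasure lamRD⁻¹)
    (P N0 η α : ℝ) (hP : 0 < P) (hN0 : 0 < N0)
    (hη0 : 0 < η) (hη1 : η ≤ 1) (hα0 : 0 < α) (hα1 : α < 1)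
    (θ2 : ℝ) (hθ2 : θ2 = Real.sqrt (N0 * (1 - α) / (2 * η * α * P)))
    (ψ : ℝ → ℝ)
    (hψ : ∀ x, ψ x = N0 ^ 2 / (P * ((2 * η * α / (1 - α)) * P * x ^ 2 - N0)) - x)
    (θ3 : ℝ) (hθ3 : θ2 < θ3) (hψθ3 : ψ θ3 = 0)
    (huniq : ∀ t, θ2 < t → ψ t = 0 → t = θ3) :
    (μ {ω | (X ω + W ω) * P * ((2 * η * α / (1 - α)) * P * W ω ^ 2 - N0) > N0 ^ 2}).toReal =
      Real.exp (-θ3 / lamRD)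
        + (1 / lamRD) * ∫ x in θ2..θ3, Real.exp (-(ψ x / lamSR + x / lamRD)) := by
  have hr1 : (0:ℝ) < lamSR⁻¹ := by positivity
  have hr2 : (0:ℝ) < lamRD⁻¹ := by positivity
  set r1 := lamSR⁻¹ with hr1def
  set r2 := lamRD⁻¹ with hr2def
  set A := 2 * η * α / (1 - α) * P with hAdef
  have h1α : (0:ℝ) < 1 - α := by linarith
  have hA : 0 < A := by positivity
  have hθ2pos : 0 < θ2 := by
    rw [hθ2]; apply Real.sqrt_pos.mpr; positivity
  have hθ2sq : A * θ2 ^ 2 = N0 := by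
    rw [hθ2, sq_sqrt (by positivity)]
    field_simp [hAdef]
    rw [hAdef]; field_simp
  -- denominators positive beyond θ2
  have hden : ∀ w, θ2 < w → 0 < P * (A * w ^ 2 - N0) := by
    intro w hw
    have hsq : θ2 ^ 2 < w ^ 2 := by nlinarith
    have : A * θ2 ^ 2 < A * w ^ 2 := mul_lt_mul_of_pos_left hsq hA
    nlinarith
  -- strict antitonicity of ψ on (θ2, ∞)
  have hanti : ∀ a b, θ2 < a → a < b → ψ b < ψ a := by
    intro a b ha hab
    have hda := hden a ha
    have hdb := hden b (ha.trans hab)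
    have hsq : a ^ 2 < b ^ 2 := by nlinarith
    have hlt : P * (A * a ^ 2 - N0) < P * (A * b ^ 2 - N0) := by
      have := mul_lt_mul_of_pos_left hsq hA
      nlinarith
    have := div_lt_div_of_pos_left (by positivity : (0:ℝ) < N0 ^ 2) hda hlt
    rw [hψ a, hψ b]
    rw [hAdef] at this ⊢
    linarith
  have hψ_nonneg : ∀ w ∈ Ioc θ2 θ3, 0 ≤ ψ w := by
    rintro w ⟨hw1, hw2⟩
    rcases eq_or_lt_of_le hw2 with h | h
    · rw [h, hψθ3]
    · have := hanti w θ3 hw1 h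
      linarith [hψθ3]
  have hψ_neg : ∀ w, θ3 < w → ψ w < 0 := by
    intro w hw
    have := hanti θ3 w hθ3 hw
    linarith [hψθ3]
  have hψm : Measurable ψ := by
    have : ψ = fun x => N0 ^ 2 / (P * (A * x ^ 2 - N0)) - x := funext hψ
    rw [this]; fun_prop
  -- the event as preimage of a set in the product space
  set T : Set (ℝ × ℝ) := {p | (p.2 + p.1) * P * (A * p.1 ^ 2 - N0) > N0 ^ 2} with hTdef
  have hTm : MeasurableSet T := by
    apply measurableSet_lt measurable_const
    fun_prop
  haveI hP1 : IsProbabilityMeasure (expMeasure r1) := isProbabilityMeasure_expMeasure hr1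
  haveI hP2 : IsProbabilityMeasure (expMeasure r2) := isProbabilityMeasure_expMeasure hr2
  have hpairmap : Measure.map (fun ω => (W ω, X ω)) μ
      = (expMeasure r2).prod (expMeasure r1) := by
    rw [← hW, ← hX]
    exact (indepFun_iff_map_prod_eq_prod_map_map hWm.aemeasurable
      hXm.aemeasurable).mp hindep.symm
  have hev : {ω | (X ω + W ω) * P * (A * W ω ^ 2 - N0) > N0 ^ 2}
      = (fun ω => (W ω, X ω)) ⁻¹' T := rfl
  have hstep1 : μ {ω | (X ω + W ω) * P * (A * W ω ^ 2 - N0) > N0 ^ 2}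
      = ∫⁻ w, expMeasure r1 (Prod.mk w ⁻¹' T) ∂(expMeasure r2) := by
    rw [hev, ← Measure.map_apply (hWm.prodMk hXm) hTm, hpairmap,
      Measure.prod_apply hTm]
  -- compute the inner (slice) measure
  have hIoi0 : ∀ᵐ w ∂(expMeasure r2), 0 ≤ w := by
    rw [ae_iff]
    have : {w : ℝ | ¬ 0 ≤ w} = Iio 0 := by ext w; simp [not_le]
    rw [this]; exact expMeasure_Iio_zero
  have hslice : ∀ᵐ w ∂(expMeasure r2), expMeasure r1 (Prod.mk w ⁻¹' T)
      = (Ioi θ2).indicator (fun w => ENNReal.ofReal (Real.exp (-(r1 * max (ψ w) 0)))) w := by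
    filter_upwards [hIoi0] with w hw
    have hpre : Prod.mk w ⁻¹' T = {x | (x + w) * P * (A * w ^ 2 - N0) > N0 ^ 2} := rfl
    by_cases hwθ : θ2 < w
    · have hd := hden w hwθ
      have hset : Prod.mk w ⁻¹' T = Ioi (ψ w) := by
        ext x
        simp only [hpre, mem_setOf_eq, mem_Ioi, hψ w, gt_iff_lt]
        rw [sub_lt_iff_lt_add, div_lt_iff₀ hd, ← mul_assoc]
      rw [hset, expMeasure_Ioi hr1, Set.indicator_of_mem (mem_Ioi.mpr hwθ)]
    · have hwle : w ≤ θ2 := not_lt.mp hwθ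
      have hsq : w ^ 2 ≤ θ2 ^ 2 := by nlinarith
      have hK : A * w ^ 2 - N0 ≤ 0 := by
        have := mul_le_mul_of_nonneg_left hsq hA.le
        linarith
      rw [Set.indicator_of_notMem (by simpa using hwθ)]
      have hsub : Prod.mk w ⁻¹' T ⊆ Iio 0 := by
        intro x hx
        simp only [hpre, mem_setOf_eq, gt_iff_lt] at hx
        by_contra hx0
        simp only [mem_Iio, not_lt] at hx0
        have h1 : 0 ≤ (x + w) * P := mul_nonneg (by linarith) hP.le
        have h2 : (x + w) * P * (A * w ^ 2 - N0) ≤ 0 := mul_nonpos_of_nonneg_of_nonpos h1 hK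
        nlinarith
      exact le_antisymm (le_trans (measure_mono hsub) expMeasure_Iio_zero.le) zero_le
  have hstep2 : (∫⁻ w, expMeasure r1 (Prod.mk w ⁻¹' T) ∂(expMeasure r2))
      = ∫⁻ w, (Ioi θ2).indicator
          (fun w => ENNReal.ofReal (Real.exp (-(r1 * max (ψ w) 0)))) w ∂(expMeasure r2) :=
    lintegral_congr_ae hslice
  have hGm : Measurable ((Ioi θ2).indicator
      (fun w => ENNReal.ofReal (Real.exp (-(r1 * max (ψ w) 0))))) := by
    exact Measurable.indicator
      ((((hψm.max measurable_const).const_mul r1).neg.exp).ennreal_ofReal) measurableSet_Ioi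
  have hdensity : expMeasure r2 = volume.withDensity (exponentialPDF r2) := rfl
  have hstep3 : (∫⁻ w, (Ioi θ2).indicator
        (fun w => ENNReal.ofReal (Real.exp (-(r1 * max (ψ w) 0)))) w ∂(expMeasure r2))
      = ∫⁻ w in Ioi θ2, exponentialPDF r2 w
          * ENNReal.ofReal (Real.exp (-(r1 * max (ψ w) 0))) := by
    have key : (exponentialPDF r2
        * (Ioi θ2).indicator (fun w => ENNReal.ofReal (Real.exp (-(r1 * max (ψ w) 0)))))
        = (Ioi θ2).indicator (fun w => exponentialPDF r2 w
            * ENNReal.ofReal (Real.exp (-(r1 * max (ψ w) 0)))) := by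
      funext w
      by_cases hwθ : w ∈ Ioi θ2
      · simp [Set.indicator_of_mem hwθ]
      · simp [Set.indicator_of_notMem hwθ]
    rw [hdensity, lintegral_withDensity_eq_lintegral_mul _
      (show Measurable (exponentialPDF r2) from
        (measurable_exponentialPDFReal r2).ennreal_ofReal) hGm, key,
      lintegral_indicator measurableSet_Ioi]
  -- split the integral at θ3
  have hsplit : Ioc θ2 θ3 ∪ Ioi θ3 = Ioi θ2 := Ioc_union_Ioi_eq_Ioi hθ3.le
  set f : ℝ → ℝ := fun w => r2 * Real.exp (-(ψ w * r1 + w * r2)) with hfdef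
  have hfm : Measurable f :=
    (((hψm.mul_const r1).add (measurable_id.mul_const r2)).neg.exp).const_mul r2
  have hpart2 : (∫⁻ w in Ioi θ3, exponentialPDF r2 w
      * ENNReal.ofReal (Real.exp (-(r1 * max (ψ w) 0))))
      = ENNReal.ofReal (Real.exp (-(r2 * θ3))) := by
    have hcong : ∀ w ∈ Ioi θ3, exponentialPDF r2 w
        * ENNReal.ofReal (Real.exp (-(r1 * max (ψ w) 0))) = exponentialPDF r2 w := by
      intro w hw
      rw [max_eq_right (hψ_neg w hw).le]
      simp
    rw [setLIntegral_congr_fun measurableSet_Ioi hcong,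
      ← expMeasure_apply' measurableSet_Ioi, expMeasure_Ioi hr2,
      max_eq_left (hθ2pos.trans hθ3).le]
  have hpart1 : (∫⁻ w in Ioc θ2 θ3, exponentialPDF r2 w
      * ENNReal.ofReal (Real.exp (-(r1 * max (ψ w) 0))))
      = ENNReal.ofReal (∫ w in Ioc θ2 θ3, f w) := by
    have hcong : ∀ w ∈ Ioc θ2 θ3, exponentialPDF r2 w
        * ENNReal.ofReal (Real.exp (-(r1 * max (ψ w) 0)))
        = ENNReal.ofReal (f w) := by
      intro w hw
      have hw0 : (0:ℝ) ≤ w := (hθ2pos.trans hw.1).le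
      rw [max_eq_left (hψ_nonneg w hw), exponentialPDF_of_nonneg hw0,
        ← ENNReal.ofReal_mul (by positivity)]
      simp only [hfdef]
      congr 1
      rw [mul_assoc, ← Real.exp_add]
      ring_nf
    rw [setLIntegral_congr_fun measurableSet_Ioc hcong]
    rw [← ofReal_integral_eq_lintegral_ofReal]
    · -- integrability of f on Ioc θ2 θ3
      apply Integrable.mono' (integrable_const r2)
        (hfm.aestronglyMeasurable)
      rw [ae_restrict_iff' measurableSet_Ioc]
      apply ae_of_all
      intro w hw
      have h1 : 0 ≤ ψ w * r1 := mul_nonneg (hψ_nonneg w hw) hr1.le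
      have h2 : 0 ≤ w * r2 := mul_nonneg (hθ2pos.trans hw.1).le hr2.le
      have : Real.exp (-(ψ w * r1 + w * r2)) ≤ 1 := by
        rw [Real.exp_le_one_iff]; linarith
      simp only [hfdef]
      rw [Real.norm_eq_abs, abs_of_nonneg (by positivity)]
      nlinarith [this, hr2]
    · apply ae_of_all
      intro w
      simp only [hfdef]
      positivity
  have hcombine : (∫⁻ w in Ioi θ2, exponentialPDF r2 w
      * ENNReal.ofReal (Real.exp (-(r1 * max (ψ w) 0))))
      = ENNReal.ofReal (∫ w in Ioc θ2 θ3, f w)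
        + ENNReal.ofReal (Real.exp (-(r2 * θ3))) := by
    rw [← hsplit, lintegral_union measurableSet_Ioi (Ioc_disjoint_Ioi le_rfl),
      hpart1, hpart2]
  rw [hstep1, hstep2, hstep3, hcombine]
  rw [ENNReal.toReal_add ENNReal.ofReal_ne_top ENNReal.ofReal_ne_top,
    ENNReal.toReal_ofReal (by positivity),
    ENNReal.toReal_ofReal (Real.exp_nonneg _)]
  have hint : (∫ w in Ioc θ2 θ3, f w)
      = (1 / lamRD) * ∫ x in θ2..θ3, Real.exp (-(ψ x / lamSR + x / lamRD)) := by
    have hfeq : ∀ w, f w = (1 / lamRD) * Real.exp (-(ψ w / lamSR + w / lamRD)) := by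
      intro w
      simp only [hfdef, hr1def, hr2def, div_eq_mul_inv, one_div]
      ring
    rw [intervalIntegral.integral_of_le hθ3.le]
    simp only [hfeq]
    rw [integral_const_mul]
  rw [hint]
  have : -(r2 * θ3) = -θ3 / lamRD := by rw [hr2def]; field_simp
  rw [this]
  ring
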